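/- Let P_r be the radial projection on ℝ^d (P_r(x) = x for ‖x‖ ≤ (1-δ)r, P_r(x) = (1-ψ(t(x)))x on the shell, P_r(x) = 0 for ‖x‖ ≥ r). Then for every nonempty v ⊆ {1,…,d} and every component index i, there is a constant c independent of r such that |∂^v P_r^{(i)}(x)| ≤ c · 1{‖x‖ < r} for all x ∈ ℝ^d. -/

import Mathlib

open Set Filter Topology

noncomputable def pospow (k : ℕ) (u : ℝ) : ℝ := (max u 0) ^ k

lemma pospow_hasDerivAt (k : ℕ) (u : ℝ) :
    HasDerivAt (pospow (k + 2)) (((k : ℝ) + 2) * pospow (k + 1) u) u := by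
  rcases lt_trichotomy u 0 with h | h | h
  · have hval : ((k : ℝ) + 2) * pospow (k + 1) u = 0 := by
      simp [pospow, max_eq_right h.le]
    rw [hval]
    have hev : (fun _ : ℝ => (0 : ℝ)) =ᶠ[𝓝 u] pospow (k + 2) := by
      filter_upwards [eventually_lt_nhds h] with y hy
      simp [pospow, max_eq_right hy.le]
    exact (hasDerivAt_const u (0 : ℝ)).congr_of_eventuallyEq hev.symm
  · subst h
    have hval : ((k : ℝ) + 2) * pospow (k + 1) 0 = 0 := by simp [pospow]
    rw [hval]
    rw [hasDerivAt_iff_tendsto_slope]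
    have hb : ∀ y : ℝ, ‖slope (pospow (k + 2)) 0 y‖ ≤ |y| ^ (k + 1) := by
      intro y
      rcases eq_or_ne y 0 with rfl | hy
      · simp [slope]
      · have h1 : (0:ℝ) ≤ max y 0 := le_max_right _ _
        have h2 : max y 0 ≤ |y| := max_le (le_abs_self y) (abs_nonneg y)
        have h3 : (max y 0) ^ (k + 2) ≤ |y| ^ (k + 2) := pow_le_pow_left₀ h1 h2 _
        have : slope (pospow (k + 2)) 0 y = (max y 0) ^ (k + 2) / y := by
          simp [slope, pospow, div_eq_inv_mul]
        rw [this, norm_div]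
        have h4 : ‖(max y 0) ^ (k + 2)‖ = (max y 0) ^ (k + 2) := by
          rw [Real.norm_eq_abs, abs_of_nonneg (pow_nonneg h1 _)]
        rw [h4, Real.norm_eq_abs]
        rw [div_le_iff₀ (abs_pos.mpr hy)]
        calc (max y 0) ^ (k + 2) ≤ |y| ^ (k + 2) := h3
          _ = |y| ^ (k + 1) * |y| := by ring
    have hlim : Tendsto (fun y : ℝ => |y| ^ (k + 1)) (𝓝[≠] (0:ℝ)) (𝓝 0) := by
      have : Tendsto (fun y : ℝ => |y| ^ (k + 1)) (𝓝 (0:ℝ)) (𝓝 (|0| ^ (k+1))) :=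
        (continuous_abs.pow (k + 1)).tendsto 0
      simpa using this.mono_left nhdsWithin_le_nhds
    exact squeeze_zero_norm hb hlim
  · have hev : (fun y : ℝ => y ^ (k + 2)) =ᶠ[𝓝 u] pospow (k + 2) := by
      filter_upwards [eventually_gt_nhds h] with y hy
      simp [pospow, max_eq_left hy.le]
    have hval : ((k : ℝ) + 2) * pospow (k + 1) u = (↑(k + 2) : ℝ) * u ^ (k + 2 - 1) := by
      push_cast [pospow, max_eq_left h.le]; ring
    rw [hval]
    exact (hasDerivAt_pow (k + 2) u).congr_of_eventuallyEq hev.symm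

lemma contDiff_pospow : ∀ k : ℕ, ContDiff ℝ k (pospow (k + 1)) := by
  intro k
  induction k with
  | zero =>
    rw [show ((0:ℕ) : WithTop ℕ∞) = 0 from rfl, contDiff_zero]
    exact ((continuous_id.max continuous_const).pow 1)
  | succ k ih =>
    have hd : ∀ u : ℝ, HasDerivAt (pospow (k + 2)) (((k : ℝ) + 2) * pospow (k + 1) u) u :=
      pospow_hasDerivAt k
    have hcast : ((k + 1 : ℕ) : WithTop ℕ∞) = (k : WithTop ℕ∞) + 1 := by push_cast; rfl
    rw [hcast, contDiff_succ_iff_deriv]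
    refine ⟨fun u => (hd u).differentiableAt, by simp, ?_⟩
    have : deriv (pospow (k + 2)) = fun u => ((k : ℝ) + 2) * pospow (k + 1) u :=
      funext fun u => (hd u).deriv
    rw [this]
    exact contDiff_const.mul ih

noncomputable def qfun (d : ℕ) (s : ℝ) : ℝ := (max (s * (1 - s)) 0) ^ d

lemma qfun_continuous (d : ℕ) : Continuous (qfun d) :=
  ((continuous_id.mul (continuous_const.sub continuous_id)).max continuous_const).pow d

lemma qfun_contDiff (d : ℕ) (hd : 0 < d) : ContDiff ℝ ((d - 1 : ℕ) : WithTop ℕ∞) (qfun d) := by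
  obtain ⟨e, rfl⟩ : ∃ e, d = e + 1 := ⟨d - 1, (Nat.succ_pred_eq_of_pos hd).symm⟩
  have h1 : ContDiff ℝ (e : WithTop ℕ∞) (pospow (e + 1)) := contDiff_pospow e
  have h2 : ContDiff ℝ (e : WithTop ℕ∞) (fun s : ℝ => s * (1 - s)) :=
    contDiff_id.mul (contDiff_const.sub contDiff_id)
  have := h1.comp h2
  exact this

noncomputable def mfun (d : ℕ) (t : ℝ) : ℝ :=
  (∫ s in (0:ℝ)..t, qfun d s) / (∫ s in (0:ℝ)..1, s ^ d * (1 - s) ^ d)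

lemma Cpos (d : ℕ) : 0 < ∫ s in (0:ℝ)..1, s ^ d * (1 - s) ^ d := by
  apply intervalIntegral.intervalIntegral_pos_of_pos_on
  · exact (Continuous.intervalIntegrable (by continuity) 0 1)
  · intro x hx
    have h1 : 0 < x := hx.1
    have h2 : x < 1 := hx.2
    exact mul_pos (pow_pos h1 d) (pow_pos (by linarith) d)
  · norm_num

lemma mfun_hasDerivAt (d : ℕ) (t : ℝ) :
    HasDerivAt (mfun d) (qfun d t / ∫ s in (0:ℝ)..1, s ^ d * (1 - s) ^ d) t := by
  have h : HasDerivAt (fun u => ∫ s in (0:ℝ)..u, qfun d s) (qfun d t) t :=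
    intervalIntegral.integral_hasDerivAt_right
      ((qfun_continuous d).intervalIntegrable 0 t)
      ((qfun_continuous d).stronglyMeasurableAtFilter _ _)
      (qfun_continuous d).continuousAt
  exact h.div_const _

lemma mfun_contDiff (d : ℕ) (hd : 0 < d) : ContDiff ℝ (d : WithTop ℕ∞) (mfun d) := by
  obtain ⟨e, rfl⟩ : ∃ e, d = e + 1 := ⟨d - 1, (Nat.succ_pred_eq_of_pos hd).symm⟩
  have hcast : ((e + 1 : ℕ) : WithTop ℕ∞) = (e : WithTop ℕ∞) + 1 := by push_cast; rfl
  rw [hcast, contDiff_succ_iff_deriv]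
  refine ⟨fun u => (mfun_hasDerivAt _ u).differentiableAt, by simp, ?_⟩
  have : deriv (mfun (e + 1)) =
      fun t => qfun (e + 1) t / ∫ s in (0:ℝ)..1, s ^ (e + 1) * (1 - s) ^ (e + 1) :=
    funext fun u => (mfun_hasDerivAt _ u).deriv
  rw [this]
  have := (qfun_contDiff (e + 1) (Nat.succ_pos e)).div_const
    (∫ s in (0:ℝ)..1, s ^ (e + 1) * (1 - s) ^ (e + 1))
  simpa using this

lemma mfun_nonpos (d : ℕ) (hd : 0 < d) {t : ℝ} (ht : t ≤ 0) : mfun d t = 0 := by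
  have h : ∀ s ∈ uIcc (0:ℝ) t, qfun d s = 0 := by
    intro s hs
    rw [uIcc_of_ge ht] at hs
    have h1 : s * (1 - s) ≤ 0 :=
      mul_nonpos_iff.mpr (Or.inr ⟨hs.2, by linarith [hs.2]⟩)
    simp [qfun, max_eq_right h1, zero_pow hd.ne']
  have : (∫ s in (0:ℝ)..t, qfun d s) = ∫ s in (0:ℝ)..t, (0:ℝ) :=
    intervalIntegral.integral_congr h
  simp [mfun, this]

lemma mfun_eq_psi (d : ℕ) {t : ℝ} (h0 : 0 ≤ t) (h1 : t ≤ 1) :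
    (∫ s in (0:ℝ)..t, qfun d s) = ∫ s in (0:ℝ)..t, s ^ d * (1 - s) ^ d := by
  apply intervalIntegral.integral_congr
  intro s hs
  rw [uIcc_of_le h0] at hs
  have hs1 : 0 ≤ s := hs.1
  have hs2 : s ≤ 1 := hs.2.trans h1
  have : (0:ℝ) ≤ s * (1 - s) := mul_nonneg hs1 (by linarith)
  simp [qfun, max_eq_left this, mul_pow]

lemma mfun_ge_one (d : ℕ) (hd : 0 < d) {t : ℝ} (ht : 1 ≤ t) :
    mfun d t = 1 := by
  have hadd : (∫ s in (0:ℝ)..1, qfun d s) + (∫ s in (1:ℝ)..t, qfun d s)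
      = ∫ s in (0:ℝ)..t, qfun d s :=
    intervalIntegral.integral_add_adjacent_intervals
      ((qfun_continuous d).intervalIntegrable 0 1)
      ((qfun_continuous d).intervalIntegrable 1 t)
  have h2 : (∫ s in (1:ℝ)..t, qfun d s) = 0 := by
    have h : ∀ s ∈ uIcc (1:ℝ) t, qfun d s = 0 := by
      intro s hs
      rw [uIcc_of_le ht] at hs
      have h1 : s * (1 - s) ≤ 0 :=
        mul_nonpos_iff.mpr (Or.inl ⟨by linarith [hs.1], by linarith [hs.1]⟩)
      simp [qfun, max_eq_right h1, zero_pow hd.ne']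
    rw [intervalIntegral.integral_congr h]
    simp
  have h1 : (∫ s in (0:ℝ)..1, qfun d s) = ∫ s in (0:ℝ)..1, s ^ d * (1 - s) ^ d :=
    mfun_eq_psi d (by norm_num) (by norm_num)
  rw [mfun, ← hadd, h2, add_zero, h1, div_self (Cpos d).ne']

noncomputable def psi (d : ℕ) (t : ℝ) : ℝ :=
  (∫ s in (0:ℝ)..t, s ^ d * (1 - s) ^ d) / (∫ s in (0:ℝ)..1, s ^ d * (1 - s) ^ d)

noncomputable def proj (d : ℕ) (δ r : ℝ) (x : EuclideanSpace ℝ (Fin d)) :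
    EuclideanSpace ℝ (Fin d) :=
  if ‖x‖ ≤ (1 - δ) * r then x
  else if ‖x‖ < r then (1 - psi d ((‖x‖ - (1 - δ) * r) / (δ * r))) • x
  else 0

lemma mfun_in_unit (d : ℕ) {t : ℝ} (h0 : 0 ≤ t) (h1 : t ≤ 1) : mfun d t = psi d t := by
  rw [mfun, psi, mfun_eq_psi d h0 h1]

lemma G_contDiff (d : ℕ) (hd : 0 < d) (δ : ℝ) (hδ1 : 0 < δ) (hδ2 : δ < 1/2) (i : Fin d) :
    ContDiff ℝ (d : WithTop ℕ∞)
      (fun x : EuclideanSpace ℝ (Fin d) => (1 - mfun d ((‖x‖ - (1 - δ)) / δ)) * x i) := by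
  rw [contDiff_iff_contDiffAt]
  intro x
  by_cases hx : x = 0
  · subst hx
    have hcoord : ContDiffAt ℝ (d : WithTop ℕ∞)
        (fun y : EuclideanSpace ℝ (Fin d) => y i) 0 :=
      (EuclideanSpace.proj (𝕜 := ℝ) i).contDiff.contDiffAt
    apply hcoord.congr_of_eventuallyEq
    have hball : Metric.ball (0 : EuclideanSpace ℝ (Fin d)) (1 - δ) ∈
        𝓝 (0 : EuclideanSpace ℝ (Fin d)) := Metric.ball_mem_nhds _ (by linarith)
    filter_upwards [hball] with y hy
    rw [mem_ball_zero_iff] at hy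
    have harg : (‖y‖ - (1 - δ)) / δ ≤ 0 :=
      div_nonpos_iff.mpr (Or.inr ⟨by linarith, hδ1.le⟩)
    rw [mfun_nonpos d hd harg]
    ring
  · have hnorm : ContDiffAt ℝ (d : WithTop ℕ∞)
        (fun y : EuclideanSpace ℝ (Fin d) => ‖y‖) x := contDiffAt_norm ℝ hx
    have harg : ContDiffAt ℝ (d : WithTop ℕ∞)
        (fun y : EuclideanSpace ℝ (Fin d) => (‖y‖ - (1 - δ)) / δ) x :=
      (hnorm.sub contDiffAt_const).div_const δ
    have hm : ContDiffAt ℝ (d : WithTop ℕ∞)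
        (fun y : EuclideanSpace ℝ (Fin d) => mfun d ((‖y‖ - (1 - δ)) / δ)) x :=
      ((mfun_contDiff d hd).contDiffAt).comp x harg
    exact (contDiffAt_const.sub hm).mul
      ((EuclideanSpace.proj (𝕜 := ℝ) i).contDiff.contDiffAt)

lemma proj_eq_G (d : ℕ) (hd : 0 < d) (δ : ℝ) (hδ1 : 0 < δ) (hδ2 : δ < 1/2)
    (r : ℝ) (hr : 0 < r) (i : Fin d) (x : EuclideanSpace ℝ (Fin d)) :
    proj d δ r x i =
      r * ((1 - mfun d ((‖r⁻¹ • x‖ - (1 - δ)) / δ)) * ((r⁻¹ • x) i)) := by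
  have hrne : r ≠ 0 := hr.ne'
  have hδr : 0 < δ * r := mul_pos hδ1 hr
  have hnorm : ‖r⁻¹ • x‖ = r⁻¹ * ‖x‖ := by
    rw [norm_smul, Real.norm_eq_abs, abs_of_pos (inv_pos.mpr hr)]
  have hargeq : (‖r⁻¹ • x‖ - (1 - δ)) / δ = (‖x‖ - (1 - δ) * r) / (δ * r) := by
    rw [hnorm]; field_simp
  have hcoord : (r⁻¹ • x) i = r⁻¹ * x i := rfl
  rw [hargeq, hcoord, proj]
  split_ifs with h1 h2
  · have harg : (‖x‖ - (1 - δ) * r) / (δ * r) ≤ 0 :=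
      div_nonpos_iff.mpr (Or.inr ⟨by linarith, hδr.le⟩)
    rw [mfun_nonpos d hd harg]
    field_simp
    simp
  · push_neg at h1
    have h0 : 0 ≤ (‖x‖ - (1 - δ) * r) / (δ * r) := div_nonneg (by linarith) hδr.le
    have ht1 : (‖x‖ - (1 - δ) * r) / (δ * r) ≤ 1 := (div_le_one hδr).mpr (by linarith)
    rw [mfun_in_unit d h0 ht1]
    have hcoord2 : ((1 - psi d ((‖x‖ - (1 - δ) * r) / (δ * r))) • x) i
        = (1 - psi d ((‖x‖ - (1 - δ) * r) / (δ * r))) * x i := rfl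
    rw [hcoord2]
    field_simp
  · push_neg at h2
    have ht : 1 ≤ (‖x‖ - (1 - δ) * r) / (δ * r) := (one_le_div hδr).mpr (by linarith)
    rw [mfun_ge_one d hd ht]
    simp

/-- The mixed partial derivative `∂^v f`, differentiating once in each coordinate of `v`,
encoded via the iterated Fréchet derivative applied to standard basis vectors. -/
noncomputable def mixedPartial (d : ℕ) (f : EuclideanSpace ℝ (Fin d) → ℝ)
    (v : Finset (Fin d)) (x : EuclideanSpace ℝ (Fin d)) : ℝ :=
  iteratedFDeriv ℝ v.card f x
    (fun k => EuclideanSpace.single ((v.orderIsoOfFin rfl k : Fin d)) (1 : ℝ))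

lemma iteratedFDeriv_congr_nhds {E F : Type*} [NormedAddCommGroup E] [NormedSpace ℝ E]
    [NormedAddCommGroup F] [NormedSpace ℝ F] {f g : E → F} {x : E} (n : ℕ)
    (h : f =ᶠ[𝓝 x] g) :
    iteratedFDeriv ℝ n f x = iteratedFDeriv ℝ n g x := by
  rw [← iteratedFDerivWithin_univ, ← iteratedFDerivWithin_univ]
  exact (h.filter_mono nhdsWithin_le_nhds).iteratedFDerivWithin_eq h.eq_of_nhds n

theorem mixedPartial_proj_bound (d : ℕ) (hd : 0 < d) (δ : ℝ)
    (hδ1 : 0 < δ) (hδ2 : δ < 1/2) (v : Finset (Fin d)) (hv : v.Nonempty) (i : Fin d) :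
    ∃ c : ℝ, ∀ r : ℝ, 1 < (1 - δ) * r →
      ∀ x : EuclideanSpace ℝ (Fin d),
        |mixedPartial d (fun y => proj d δ r y i) v x| ≤
          c * (if ‖x‖ < r then (1 : ℝ) else 0) := by
  classical
  set E := EuclideanSpace ℝ (Fin d)
  set n := v.card with hn
  have hn1 : 1 ≤ n := Finset.card_pos.mpr hv
  have hnd : n ≤ d := by
    have := Finset.card_le_univ v
    simpa using this
  have hndc : (n : WithTop ℕ∞) ≤ (d : WithTop ℕ∞) := by exact_mod_cast hnd
  set G : E → ℝ := fun x => (1 - mfun d ((‖x‖ - (1 - δ)) / δ)) * x i with hGdef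
  have hG : ContDiff ℝ (d : WithTop ℕ∞) G := G_contDiff d hd δ hδ1 hδ2 i
  have hGcont : Continuous (iteratedFDeriv ℝ n G) := hG.continuous_iteratedFDeriv hndc
  obtain ⟨M, hM⟩ : ∃ M, ∀ y ∈ Metric.closedBall (0 : E) 1, ‖iteratedFDeriv ℝ n G y‖ ≤ M :=
    (isCompact_closedBall (0 : E) 1).exists_bound_of_continuousOn hGcont.continuousOn
  have hM0 : 0 ≤ M := le_trans (norm_nonneg _) (hM 0 (by simp))
  refine ⟨M, ?_⟩
  intro r hr x
  have hr1 : 1 < r := by nlinarith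
  have hr0 : 0 < r := by linarith
  set A : E →L[ℝ] E := r⁻¹ • ContinuousLinearMap.id ℝ E with hAdef
  have hfun : (fun y : E => proj d δ r y i) = fun y => r • ((G ∘ A) y) := by
    funext y
    have := proj_eq_G d hd δ hδ1 hδ2 r hr0 i y
    exact this
  have hGA : ContDiff ℝ (d : WithTop ℕ∞) (G ∘ A) := hG.comp A.contDiff
  by_cases hx : ‖x‖ < r
  · rw [if_pos hx, mul_one]
    have h1 : iteratedFDeriv ℝ n (fun y : E => proj d δ r y i) x
        = r • iteratedFDeriv ℝ n (G ∘ A) x := by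
      rw [hfun]
      exact iteratedFDeriv_const_smul_apply' (hGA.of_le hndc).contDiffAt
    have h2 : iteratedFDeriv ℝ n (G ∘ A) x
        = (iteratedFDeriv ℝ n G (A x)).compContinuousLinearMap fun _ => A :=
      A.iteratedFDeriv_comp_right hG x hndc
    have hAx : A x ∈ Metric.closedBall (0 : E) 1 := by
      simp only [hAdef, ContinuousLinearMap.smul_apply, ContinuousLinearMap.id_apply,
        Metric.mem_closedBall, dist_zero_right]
      rw [norm_smul, Real.norm_eq_abs, abs_of_pos (inv_pos.mpr hr0)]
      rw [inv_mul_le_one₀ hr0]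
      simpa using hx.le
    have hFnorm : ‖iteratedFDeriv ℝ n G (A x)‖ ≤ M := hM _ hAx
    set F := iteratedFDeriv ℝ n G (A x) with hF
    set m : Fin n → E := fun k => EuclideanSpace.single ((v.orderIsoOfFin rfl k : Fin d)) (1 : ℝ)
    have happ : mixedPartial d (fun y => proj d δ r y i) v x
        = r * (F fun k => A (m k)) := by
      rw [mixedPartial]
      show (iteratedFDeriv ℝ n (fun y : E => proj d δ r y i) x) m = _
      rw [h1, h2]
      simp [smul_eq_mul]
    rw [happ]
    have hmk : ∀ k, ‖A (m k)‖ = r⁻¹ := by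
      intro k
      simp only [hAdef, ContinuousLinearMap.smul_apply, ContinuousLinearMap.id_apply]
      rw [norm_smul, Real.norm_eq_abs, abs_of_pos (inv_pos.mpr hr0)]
      simp only [m]
      rw [EuclideanSpace.norm_single]
      simp
    have hb : |F fun k => A (m k)| ≤ M * r⁻¹ ^ n := by
      have := F.le_opNorm fun k => A (m k)
      rw [Real.norm_eq_abs] at this
      calc |F fun k => A (m k)| ≤ ‖F‖ * ∏ k : Fin n, ‖A (m k)‖ := this
        _ = ‖F‖ * r⁻¹ ^ n := by
            congr 1
            simp [hmk]
        _ ≤ M * r⁻¹ ^ n := by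
            apply mul_le_mul_of_nonneg_right hFnorm (by positivity)
    have hrn : r * r⁻¹ ^ n ≤ 1 := by
      have h1n : r⁻¹ ^ n ≤ r⁻¹ ^ 1 :=
        pow_le_pow_of_le_one (by positivity) (inv_le_one_of_one_le₀ hr1.le) hn1
      have : r * r⁻¹ ^ n ≤ r * r⁻¹ ^ 1 := by
        apply mul_le_mul_of_nonneg_left h1n hr0.le
      simpa [mul_inv_cancel₀ hr0.ne'] using this
    calc |r * (F fun k => A (m k))| = r * |F fun k => A (m k)| := by
          rw [abs_mul, abs_of_pos hr0]
      _ ≤ r * (M * r⁻¹ ^ n) := mul_le_mul_of_nonneg_left hb hr0.le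
      _ = M * (r * r⁻¹ ^ n) := by ring
      _ ≤ M * 1 := mul_le_mul_of_nonneg_left hrn hM0
      _ = M := mul_one M
  · rw [if_neg hx, mul_zero]
    push_neg at hx
    set H := iteratedFDeriv ℝ n (fun y : E => proj d δ r y i) with hH
    have hsm : ContDiff ℝ (d : WithTop ℕ∞) (fun y : E => proj d δ r y i) := by
      rw [hfun]; exact hGA.const_smul r
    have hHcont : Continuous H := hsm.continuous_iteratedFDeriv hndc
    set U : Set E := {y | r < ‖y‖} with hU
    have hUopen : IsOpen U := isOpen_lt continuous_const continuous_norm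
    have hEq : Set.EqOn H (fun _ => (0 : ContinuousMultilinearMap ℝ (fun _ : Fin n => E) ℝ)) U := by
      intro y hy
      have hev : (fun y : E => proj d δ r y i) =ᶠ[𝓝 y] fun _ => (0 : ℝ) := by
        filter_upwards [hUopen.mem_nhds hy] with z hz
        have hz' : r < ‖z‖ := hz
        have h1 : ¬ ‖z‖ ≤ (1 - δ) * r := by nlinarith
        have h2 : ¬ ‖z‖ < r := by linarith
        simp [proj, h1, h2]
      have := iteratedFDeriv_congr_nhds n hev
      rw [hH, this, iteratedFDeriv_zero_fun]
      rfl
    have hxcl : x ∈ closure U := by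
      rcases lt_or_eq_of_le hx with h | h
      · exact subset_closure h
      · rw [mem_closure_iff_seq_limit]
        refine ⟨fun j => (1 + 1 / ((j : ℝ) + 1)) • x, ?_, ?_⟩
        · intro j
          have hpos : (0:ℝ) < 1 + 1 / ((j : ℝ) + 1) := by positivity
          have h1 : (1:ℝ) < 1 + 1 / ((j : ℝ) + 1) := by
            have : (0:ℝ) < 1 / ((j : ℝ) + 1) := by positivity
            linarith
          show r < ‖(1 + 1 / ((j : ℝ) + 1)) • x‖
          rw [norm_smul, Real.norm_eq_abs, abs_of_pos hpos, ← h]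
          nlinarith [h ▸ hr0]
        · have h1 : Tendsto (fun j : ℕ => 1 + 1 / ((j : ℝ) + 1)) atTop (𝓝 (1 + 0)) :=
            tendsto_const_nhds.add tendsto_one_div_add_atTop_nhds_zero_nat
          have := h1.smul_const x
          simpa using this
    have hHx : H x = 0 := hEq.closure hHcont continuous_const hxcl
    have : mixedPartial d (fun y => proj d δ r y i) v x = 0 := by
      rw [mixedPartial]
      show (H x) _ = 0
      rw [hHx]
      rfl
    rw [this]
    simp
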